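/- arXiv:1909.09772 — 6 statements merged into one kernel-verified Lean document; each statement's English description precedes it below -/
import Mathlib

section
/- Let X, Y be finite metric spaces, and suppose there exists a d-bounded curvature K ∈ K_n(X) with d > 0 and n > |Y|. Then the Hausdorff distance (with respect to the l∞ matrix distance) between K_n(X) and K_n(Y) is at least d. -/
/-- The `n`-th curvature set of a metric space `X`: all `n × n` matrices of pairwise
distances of `n`-tuples of points of `X` (as elements of `Fin n → Fin n → ℝ`, which
carries the sup (`l∞`) metric). -/
def curvatureSet (X : Type*) [MetricSpace X] (n : ℕ) : Set (Fin n → Fin n → ℝ) :=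
  {A | ∃ x : Fin n → X, A = fun i j => dist (x i) (x j)}

lemma curvatureSet_finite (X : Type*) [MetricSpace X] [Fintype X] (n : ℕ) :
    (curvatureSet X n).Finite := by
  have : curvatureSet X n =
      Set.range (fun x : Fin n → X => fun i j => dist (x i) (x j)) := by
    ext A; simp [curvatureSet, Set.mem_range, eq_comm]
  rw [this]
  exact Set.finite_range _

/-- if there is a `d`-bounded curvature `K ∈ K_n(X)` with `d > 0` and
`n > |Y|`, then the Hausdorff distance (w.r.t. the `l∞` matrix distance) between
`K_n(X)` and `K_n(Y)` is at least `d`. -/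
theorem stmt_11 {X Y : Type*} [MetricSpace X] [MetricSpace Y]
    [Fintype X] [Fintype Y] [Nonempty Y] {n : ℕ} {d : ℝ} (hd : 0 < d)
    (x : Fin n → X) (hK : ∀ i j : Fin n, i ≠ j → d ≤ dist (x i) (x j))
    (hn : Fintype.card Y < n) :
    d ≤ Metric.hausdorffDist (curvatureSet X n) (curvatureSet Y n) := by
  set K : Fin n → Fin n → ℝ := fun i j => dist (x i) (x j) with hKdef
  have hKmem : K ∈ curvatureSet X n := ⟨x, rfl⟩
  have hYne : (curvatureSet Y n).Nonempty :=
    ⟨fun i j => dist ((fun _ => Classical.arbitrary Y) i)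
      ((fun _ => Classical.arbitrary Y) j), fun _ => Classical.arbitrary Y, rfl⟩
  have hfin : EMetric.hausdorffEdist (curvatureSet X n) (curvatureSet Y n) ≠ ⊤ :=
    Metric.hausdorffEdist_ne_top_of_nonempty_of_bounded ⟨K, hKmem⟩ hYne
      (curvatureSet_finite X n).isBounded (curvatureSet_finite Y n).isBounded
  have hinf : d ≤ Metric.infDist K (curvatureSet Y n) := by
    obtain ⟨B, hBmem, hBeq⟩ := ((curvatureSet_finite Y n).isCompact).exists_infDist_eq_dist
      hYne K
    rw [hBeq]
    obtain ⟨y, rfl⟩ := hBmem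
    obtain ⟨i, j, hij, hyij⟩ : ∃ i j : Fin n, i ≠ j ∧ y i = y j := by
      have := Fintype.exists_ne_map_eq_of_card_lt y (by simpa using hn)
      obtain ⟨i, j, hij, h⟩ := this
      exact ⟨i, j, hij, h⟩
    calc d ≤ dist (x i) (x j) := hK i j hij
    _ = |K i j - dist (y i) (y j)| := by
        rw [hyij, dist_self]
        simp [hKdef, abs_of_nonneg dist_nonneg]
    _ = dist (K i j) (dist (y i) (y j)) := (Real.dist_eq _ _).symm
    _ ≤ dist (K i) (fun j => dist (y i) (y j)) := dist_le_pi_dist (K i) (fun j => dist (y i) (y j)) j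
    _ ≤ dist K (fun i j => dist (y i) (y j)) := dist_le_pi_dist K (fun i j => dist (y i) (y j)) i
  exact hinf.trans (Metric.infDist_le_hausdorffDist_of_mem hKmem hfin)
end

section
/- Let X, Y be finite compact metric spaces and suppose K ∈ K_n(X) is d-bounded for some d > 0 with n > |Y|. Then the modified Gromov–Hausdorff distance satisfies d̂_GH(X, Y) ≥ d/2. -/
/-- The distortion of a map `φ` between metric spaces:
`dis φ = sup_{a,b} |d(a,b) - d(φ a, φ b)|`. -/
noncomputable def mapDistortion {X Y : Type*} [MetricSpace X] [MetricSpace Y]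
    (φ : X → Y) : ℝ :=
  ⨆ a : X, ⨆ b : X, |dist a b - dist (φ a) (φ b)|

/-- The modified Gromov–Hausdorff distance
`d̂_GH(X,Y) = (1/2) max {inf_φ dis φ, inf_ψ dis ψ}`. -/
noncomputable def modGH (X Y : Type*) [MetricSpace X] [MetricSpace Y] : ℝ :=
  (1 / 2) * max (⨅ φ : X → Y, mapDistortion φ) (⨅ ψ : Y → X, mapDistortion ψ)

/-- Theorem 1 of the paper: if `K ∈ K_n(X)` is `d`-bounded for some `d > 0`
and `n > |Y|`, then `d̂_GH(X,Y) ≥ d/2`. -/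
theorem stmt_12 {X Y : Type*} [MetricSpace X] [MetricSpace Y]
    [Fintype X] [Fintype Y] [Nonempty X] [Nonempty Y] {n : ℕ} {d : ℝ} (hd : 0 < d)
    (x : Fin n → X) (hK : ∀ i j : Fin n, i ≠ j → d ≤ dist (x i) (x j))
    (hn : Fintype.card Y < n) :
    d / 2 ≤ modGH X Y := by
  have key : ∀ φ : X → Y, d ≤ mapDistortion φ := by
    intro φ
    obtain ⟨i, j, hij, hφ⟩ : ∃ i j : Fin n, i ≠ j ∧ φ (x i) = φ (x j) := by
      have := Fintype.exists_ne_map_eq_of_card_lt (fun i : Fin n => φ (x i))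
        (by simpa using hn)
      obtain ⟨i, j, hij, h⟩ := this
      exact ⟨i, j, hij, h⟩
    have hle : d ≤ |dist (x i) (x j) - dist (φ (x i)) (φ (x j))| := by
      rw [hφ, dist_self, sub_zero]
      exact le_trans (hK i j hij) (le_abs_self _)
    refine le_trans hle ?_
    have hb : ∀ a : X, BddAbove (Set.range fun b : X =>
        |dist a b - dist (φ a) (φ b)|) := fun a => Set.Finite.bddAbove (Set.finite_range _)
    have h1 : |dist (x i) (x j) - dist (φ (x i)) (φ (x j))| ≤
        ⨆ b : X, |dist (x i) b - dist (φ (x i)) (φ b)| := le_ciSup (hb (x i)) (x j)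
    refine h1.trans (le_ciSup (f := fun a : X => ⨆ b : X, |dist a b - dist (φ a) (φ b)|)
      (Set.Finite.bddAbove (Set.finite_range _)) (x i))
  have h2 : d ≤ ⨅ φ : X → Y, mapDistortion φ := le_ciInf key
  have h3 : d ≤ max (⨅ φ : X → Y, mapDistortion φ) (⨅ ψ : Y → X, mapDistortion ψ) :=
    h2.trans (le_max_left _ _)
  unfold modGH
  linarith
end

section
/- Let X, Y be finite metric spaces, K ∈ K_n(X) be d-bounded for some d > 0, with n ≤ |Y|. If there exists a row index i ∈ {1,…,n} such that for every matrix L that is a permutation similarity of an n×n principal submatrix of D^Y, the l∞ distance between the i-th rows of K and L is ≥ d, then d_{l∞}(K, K_n(Y)) ≥ d, i.e., every L ∈ K_n(Y) satisfies d_{l∞}(K, L) ≥ d. -/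
/-- Lemma 1 of the paper: let `K ∈ K_n(X)` be the `d`-bounded curvature of
the tuple `x`, with `d > 0` and `n ≤ |Y|`. If some row index `i` satisfies
`‖row_i(K) - row_i(L)‖_∞ ≥ d` for every `L ∈ PSPS^n(D^Y)` (i.e. every matrix
`L = (d_Y(σ j, σ k))` with `σ : Fin n → Y` injective), then every curvature
`L ∈ K_n(Y)` (given by an arbitrary tuple `y : Fin n → Y`) satisfies
`d_{l∞}(K, L) ≥ d`. -/
theorem stmt_13 {X Y : Type*} [MetricSpace X] [MetricSpace Y]
    [Fintype X] [Fintype Y] {n : ℕ} {d : ℝ} (hd : 0 < d)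
    (x : Fin n → X) (hK : ∀ i j : Fin n, i ≠ j → d ≤ dist (x i) (x j))
    (hn : n ≤ Fintype.card Y)
    (h : ∃ i : Fin n, ∀ σ : Fin n → Y, Function.Injective σ →
      d ≤ ⨆ k : Fin n, |dist (x i) (x k) - dist (σ i) (σ k)|) :
    ∀ y : Fin n → Y,
      d ≤ ⨆ i : Fin n, ⨆ j : Fin n, |dist (x i) (x j) - dist (y i) (y j)| := by
  obtain ⟨i, hi⟩ := h
  intro y
  have bdd : ∀ a : Fin n, BddAbove
      (Set.range fun k : Fin n => |dist (x a) (x k) - dist (y a) (y k)|) :=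
    fun a => Set.Finite.bddAbove (Set.finite_range _)
  have bdd2 : BddAbove (Set.range fun a : Fin n =>
      ⨆ j, |dist (x a) (x j) - dist (y a) (y j)|) :=
    Set.Finite.bddAbove (Set.finite_range _)
  by_cases hinj : Function.Injective y
  · exact (hi y hinj).trans (le_ciSup bdd2 i)
  · simp only [Function.Injective, not_forall] at hinj
    obtain ⟨j, k, hyk, hjk⟩ := hinj
    have hd2 : d ≤ |dist (x j) (x k) - dist (y j) (y k)| := by
      rw [hyk, dist_self, sub_zero]
      exact (hK j k hjk).trans (le_abs_self _)
    exact hd2.trans ((le_ciSup (bdd j) k).trans (le_ciSup bdd2 j))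
end

section
/- Let X, Y be finite compact metric spaces, K ∈ K_n(X) d-bounded for d > 0 with n ≤ |Y|. If some i ∈ {1,…,n} satisfies ||row_i(K) - row_i(L)||_∞ ≥ d for every L that is a permutation similarity of an n×n principal submatrix of D^Y, then d̂_GH(X, Y) ≥ d/2. -/
/-- Theorem 2 of the paper: let `K ∈ K_n(X)` be the `d`-bounded curvature
of the tuple `x`, `d > 0`, `n ≤ |Y|`. If some row index `i` satisfies
`‖row_i(K) - row_i(L)‖_∞ ≥ d` for every `L ∈ PSPS^n(D^Y)` (every matrix
`(d_Y(σ j, σ k))` with `σ : Fin n → Y` injective), then `d̂_GH(X,Y) ≥ d/2`. -/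
theorem stmt_14 {X Y : Type*} [MetricSpace X] [MetricSpace Y]
    [Fintype X] [Fintype Y] [Nonempty X] [Nonempty Y] {n : ℕ} {d : ℝ} (hd : 0 < d)
    (x : Fin n → X) (hK : ∀ i j : Fin n, i ≠ j → d ≤ dist (x i) (x j))
    (hn : n ≤ Fintype.card Y)
    (h : ∃ i : Fin n, ∀ σ : Fin n → Y, Function.Injective σ →
      d ≤ ⨆ k : Fin n, |dist (x i) (x k) - dist (σ i) (σ k)|) :
    d / 2 ≤ modGH X Y := by
  obtain ⟨i, hi⟩ := h
  haveI : Nonempty (Fin n) := ⟨i⟩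
  have key : ∀ φ : X → Y, d ≤ mapDistortion φ := by
    intro φ
    have hb : ∀ (g : X → ℝ), BddAbove (Set.range g) :=
      fun g => (Set.finite_range g).bddAbove
    have step : ∀ a b : X, |dist a b - dist (φ a) (φ b)| ≤ mapDistortion φ := by
      intro a b
      calc |dist a b - dist (φ a) (φ b)|
          ≤ ⨆ b', |dist a b' - dist (φ a) (φ b')| :=
            le_ciSup (hb fun b' => |dist a b' - dist (φ a) (φ b')|) b
        _ ≤ mapDistortion φ := by
            unfold mapDistortion
            exact le_ciSup (hb fun a' => ⨆ b', |dist a' b' - dist (φ a') (φ b')|) a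
    by_cases hinj : Function.Injective (φ ∘ x)
    · refine le_trans (hi (φ ∘ x) hinj) (ciSup_le fun k => ?_)
      exact step (x i) (x k)
    · rw [Function.not_injective_iff] at hinj
      obtain ⟨j, k, hjk, hne⟩ := hinj
      have h1 : d ≤ dist (x j) (x k) := hK j k hne
      have h2 : dist (φ (x j)) (φ (x k)) = 0 := by
        simp [Function.comp] at hjk; simp [hjk]
      calc d ≤ dist (x j) (x k) := h1
        _ = |dist (x j) (x k) - dist (φ (x j)) (φ (x k))| := by
            rw [h2, sub_zero, abs_of_nonneg dist_nonneg]
        _ ≤ mapDistortion φ := step (x j) (x k)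
  have hinf : d ≤ ⨅ φ : X → Y, mapDistortion φ := le_ciInf key
  have hmax : d ≤ max (⨅ φ : X → Y, mapDistortion φ) (⨅ ψ : Y → X, mapDistortion ψ) :=
    le_trans hinf (le_max_left _ _)
  unfold modGH
  linarith
end

section
/- Let v ∈ ℝ^p and u ∈ ℝ^q have entries sorted in ascending order: v_1 ≤ … ≤ v_p and u_1 ≤ … ≤ u_q, and let d > 0. Then there exists a strictly increasing map f : {1,…,p} → {1,…,q} with |v_k - u_{f(k)}| < d for all k if and only if there exists any injective map g : {1,…,p} → {1,…,q} with |v_k - u_{g(k)}| < d for all k. -/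
/-- for sorted vectors `v ∈ ℝ^p`, `u ∈ ℝ^q` and `d > 0`, there is a strictly
increasing feasible assignment `f` (with `|v k - u (f k)| < d` for all `k`) if and only if
there is any injective feasible assignment. -/
theorem stmt_16 {p q : ℕ} (v : Fin p → ℝ) (u : Fin q → ℝ)
    (hv : Monotone v) (hu : Monotone u) (d : ℝ) (hd : 0 < d) :
    (∃ f : Fin p → Fin q, StrictMono f ∧ ∀ k, |v k - u (f k)| < d) ↔
      (∃ g : Fin p → Fin q, Function.Injective g ∧ ∀ k, |v k - u (g k)| < d) := by
  constructor
  · rintro ⟨f, hf, hfd⟩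
    exact ⟨f, hf.injective, hfd⟩
  · rintro ⟨g, hg, hgd⟩
    set S : Finset (Fin q) := Finset.univ.image g with hSdef
    have hS : S.card = p := by
      rw [hSdef, Finset.card_image_of_injective _ hg, Finset.card_univ, Fintype.card_fin]
    set e := S.orderIsoOfFin hS with he
    set f : Fin p → Fin q := fun k => (e k : Fin q) with hfdef
    have hgmem : ∀ j, g j ∈ S := fun j => Finset.mem_image_of_mem g (Finset.mem_univ j)
    set τ : Fin p → Fin p := fun j => e.symm ⟨g j, hgmem j⟩ with hτdef
    have hτinj : Function.Injective τ := by
      intro a b hab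
      apply hg
      have := e.symm.injective hab
      exact congrArg Subtype.val this
    have hge : ∀ j, g j = f (τ j) := by
      intro j
      simp [hfdef, hτdef]
    have claim1 : ∀ k : Fin p, ∃ j, j ≤ k ∧ k ≤ τ j := by
      intro k
      by_contra h
      push_neg at h
      have hcard := Finset.card_le_card_of_injOn τ
        (fun j hj => Finset.mem_Iio.mpr (h j (Finset.mem_Iic.mp hj)))
        (fun a _ b _ hab => hτinj hab)
      rw [Fin.card_Iic, Fin.card_Iio] at hcard
      omega
    have claim2 : ∀ k : Fin p, ∃ j, k ≤ j ∧ τ j ≤ k := by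
      intro k
      by_contra h
      push_neg at h
      have hcard := Finset.card_le_card_of_injOn τ
        (fun j hj => Finset.mem_Ioi.mpr (h j (Finset.mem_Ici.mp hj)))
        (fun a _ b _ hab => hτinj hab)
      rw [Fin.card_Ici, Fin.card_Ioi] at hcard
      omega
    refine ⟨f, fun a b hab => ?_, fun k => abs_lt.mpr ⟨?_, ?_⟩⟩
    · exact Subtype.coe_lt_coe.mpr (e.strictMono hab)
    · -- -d < v k - u (f k), i.e. u (f k) < v k + d : use j ≤ k with k ≤ τ j
      obtain ⟨j, hj, hjk⟩ := claim1 k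
      have h1 : f k ≤ g j := by
        rw [hge j]
        exact Subtype.coe_le_coe.mpr (e.monotone hjk)
      have h2 : u (f k) ≤ u (g j) := hu h1
      have h3 := abs_lt.mp (hgd j)
      have h4 : v j ≤ v k := hv hj
      linarith
    · -- v k - u (f k) < d, i.e. v k - d < u (f k) : use j ≥ k with τ j ≤ k
      obtain ⟨j, hj, hjk⟩ := claim2 k
      have h1 : g j ≤ f k := by
        rw [hge j]
        exact Subtype.coe_le_coe.mpr (e.monotone hjk)
      have h2 : u (g j) ≤ u (f k) := hu h1
      have h3 := abs_lt.mp (hgd j)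
      have h4 : v k ≤ v j := hv hj
      linarith
end

section
/- Let v ∈ ℝ^p and u ∈ ℝ^q be sorted ascending, d > 0. Define the greedy assignment: process k = 1,…,p, assigning v_k to the smallest-index unassigned u_h with |v_k - u_h| < d (entries u_h with u_h ≤ v_k - d are permanently discarded). The greedy procedure succeeds (assigns all of v) if and only if there exists an injective f : {1,…,p} → {1,…,q} with |v_k - u_{f(k)}| < d for all k. -/
/-- The greedy assignment procedure of `SolveFeasibleAssignment`: processing the sorted
entries of `v` in order, each entry `v_k` is matched to the smallest-index remaining entry
`u_h` with `|v_k - u_h| < d`; entries `u_h ≤ v_k - d` are permanently discarded, and the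
procedure fails if an entry `v_k` cannot be matched. `greedy d vs us` holds iff the
procedure succeeds in assigning all of `vs` into `us`. -/
def greedy (d : ℝ) : List ℝ → List ℝ → Prop
  | [], _ => True
  | _ :: _, [] => False
  | v :: vs, u :: us =>
    (|v - u| < d ∧ greedy d vs us) ∨
      (¬ |v - u| < d ∧ u ≤ v - d ∧ greedy d (v :: vs) us)
termination_by l₁ l₂ => l₁.length + l₂.length


abbrev Mm (d : ℝ) (vs us : List ℝ) : Prop :=
  ∃ f : Fin vs.length → Fin us.length, Function.Injective f ∧
    ∀ k, |vs.get k - us.get (f k)| < d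

lemma head_le_get {v : ℝ} {vs : List ℝ} (h : (v :: vs).Pairwise (· ≤ ·))
    (k : Fin (v :: vs).length) : v ≤ (v :: vs).get k :=
  h.rel_get_of_le (Fin.zero_le k)

lemma Mm_cons {d v u : ℝ} {vs us : List ℝ} (hvu : |v - u| < d) (h : Mm d vs us) :
    Mm d (v :: vs) (u :: us) := by
  obtain ⟨f, hf, hfd⟩ := h
  refine ⟨Fin.cons (0 : Fin (us.length + 1)) (fun j => (f j).succ), ?_, ?_⟩
  · intro a b hab
    induction a using Fin.cases <;> induction b using Fin.cases <;>
      simp [Fin.cons] at hab ⊢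
    · exact absurd hab.symm (Fin.succ_ne_zero _)
    · exact hf hab
  · intro k
    induction k using Fin.cases with
    | zero => simpa [Fin.cons] using hvu
    | succ j => simpa [Fin.cons] using hfd j

lemma Mm_skip {d u : ℝ} {vs us : List ℝ} (h : Mm d vs us) : Mm d vs (u :: us) := by
  obtain ⟨f, hf, hfd⟩ := h
  exact ⟨fun k => (f k).succ, fun a b hab => hf (Fin.succ_injective _ hab),
    fun k => by simpa using hfd k⟩

lemma Mm_unshift {d u : ℝ} {vs us : List ℝ} (h : Mm d vs (u :: us))
    (hbig : ∀ k : Fin vs.length, d ≤ |vs.get k - u|) : Mm d vs us := by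
  obtain ⟨f, hf, hfd⟩ := h
  have hne : ∀ k, f k ≠ (0 : Fin (us.length + 1)) := by
    intro k hk
    have := hfd k
    rw [hk] at this
    exact absurd this (not_lt.mpr (hbig k))
  refine ⟨fun k => (f k).pred (hne k), ?_, ?_⟩
  · intro a b hab
    apply hf
    rw [← Fin.succ_pred (f a) (hne a), ← Fin.succ_pred (f b) (hne b)]
    exact congrArg Fin.succ hab
  · intro k
    have key : us.get ((f k).pred (hne k)) = (u :: us).get (f k) := by
      conv_rhs => rw [← Fin.succ_pred (f k) (hne k)]
      exact List.get_cons_succ.symm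
    show |vs.get k - us.get ((f k).pred (hne k))| < d
    rw [key]
    exact hfd k

lemma Mm_exchange {d v u : ℝ} {vs us : List ℝ}
    (hv : (v :: vs).Pairwise (· ≤ ·)) (hu : (u :: us).Pairwise (· ≤ ·))
    (h : Mm d (v :: vs) (u :: us)) : Mm d vs us := by
  obtain ⟨f, hf, hfd⟩ := h
  have hj0 : ∀ k : Fin vs.length, f k.succ = (0 : Fin (us.length + 1)) →
      f (0 : Fin (vs.length + 1)) ≠ (0 : Fin (us.length + 1)) := by
    intro k hk h0
    exact Fin.succ_ne_zero k (hf (hk.trans h0.symm))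
  refine ⟨fun k => if hk : f k.succ = (0 : Fin (us.length + 1)) then
      (f (0 : Fin (vs.length + 1))).pred (hj0 k hk) else (f k.succ).pred hk, ?_, ?_⟩
  · intro a b hab
    dsimp only at hab
    by_cases ha : f a.succ = (0 : Fin (us.length + 1)) <;>
      by_cases hb : f b.succ = (0 : Fin (us.length + 1))
    · exact Fin.succ_injective _ (hf (ha.trans hb.symm))
    · rw [dif_pos ha, dif_neg hb] at hab
      have : f (0 : Fin (vs.length + 1)) = f b.succ := by
        rw [← Fin.succ_pred (f (0 : Fin (vs.length + 1))) (hj0 a ha),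
          ← Fin.succ_pred (f b.succ) hb, hab]
      exact absurd (hf this).symm (Fin.succ_ne_zero b)
    · rw [dif_neg ha, dif_pos hb] at hab
      have : f (0 : Fin (vs.length + 1)) = f a.succ := by
        rw [← Fin.succ_pred (f (0 : Fin (vs.length + 1))) (hj0 b hb),
          ← Fin.succ_pred (f a.succ) ha, hab]
      exact absurd (hf this).symm (Fin.succ_ne_zero a)
    · rw [dif_neg ha, dif_neg hb] at hab
      have : f a.succ = f b.succ := by
        rw [← Fin.succ_pred (f a.succ) ha, ← Fin.succ_pred (f b.succ) hb, hab]
      exact Fin.succ_injective _ (hf this)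
  · intro k
    have e1 : vs.get k = (v :: vs).get k.succ := List.get_cons_succ.symm
    dsimp only
    split_ifs with hk
    · have key : us.get ((f (0 : Fin (vs.length + 1))).pred (hj0 k hk)) =
          (u :: us).get (f (0 : Fin (vs.length + 1))) := by
        conv_rhs => rw [← Fin.succ_pred (f (0 : Fin (vs.length + 1))) (hj0 k hk)]
        exact List.get_cons_succ.symm
      rw [e1, key]
      have h1 : |(v :: vs).get k.succ - u| < d := by
        have := hfd k.succ; rw [hk] at this; exact this
      have h2 : |v - (u :: us).get (f (0 : Fin (vs.length + 1)))| < d :=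
        hfd (0 : Fin (vs.length + 1))
      have hvk : v ≤ (v :: vs).get k.succ := head_le_get hv _
      have huj : u ≤ (u :: us).get (f (0 : Fin (vs.length + 1))) := head_le_get hu _
      rw [abs_lt] at h1 h2 ⊢
      constructor <;> [linarith [h2.1]; linarith [h1.1]]
    · have key : us.get ((f k.succ).pred hk) = (u :: us).get (f k.succ) := by
        conv_rhs => rw [← Fin.succ_pred (f k.succ) hk]
        exact List.get_cons_succ.symm
      rw [e1, key]
      exact hfd k.succ

/-- for ascending `vs` and `us` and `d > 0`, the greedy procedure succeeds
iff there exists an injective assignment `f` with `|vs_k - us_{f k}| < d` for all `k`. -/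
theorem stmt_17 (d : ℝ) (hd : 0 < d) (vs us : List ℝ)
    (hv : vs.Pairwise (· ≤ ·)) (hu : us.Pairwise (· ≤ ·)) :
    greedy d vs us ↔
      ∃ f : Fin vs.length → Fin us.length, Function.Injective f ∧
        ∀ k, |vs.get k - us.get (f k)| < d := by
  induction us generalizing vs with
  | nil =>
    cases vs with
    | nil =>
      simp only [greedy, true_iff]
      exact ⟨finZeroElim, fun a => a.elim0, fun k => k.elim0⟩
    | cons v vs =>
      simp only [greedy, false_iff]
      rintro ⟨f, -, -⟩
      exact (f (0 : Fin (vs.length + 1))).elim0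
  | cons u us ih =>
    cases vs with
    | nil =>
      simp only [greedy, true_iff]
      exact ⟨finZeroElim, fun a => a.elim0, fun k => k.elim0⟩
    | cons v vs =>
      rw [greedy, ih vs hv.of_cons hu.of_cons, ih (v :: vs) hv hu.of_cons]
      constructor
      · rintro (⟨h1, hM⟩ | ⟨-, -, hM⟩)
        · exact Mm_cons h1 hM
        · exact Mm_skip hM
      · intro hM
        by_cases hvu : |v - u| < d
        · exact Or.inl ⟨hvu, Mm_exchange hv hu hM⟩
        · right
          have hud : u ≤ v - d := by
            obtain ⟨f, hf, hfd⟩ := hM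
            have h0 : |v - (u :: us).get (f (0 : Fin (vs.length + 1)))| < d :=
              hfd (0 : Fin (vs.length + 1))
            have hule : u ≤ (u :: us).get (f (0 : Fin (vs.length + 1))) := head_le_get hu _
            rw [abs_lt] at h0
            have hd2 : d ≤ |v - u| := le_of_not_gt hvu
            rcases abs_cases (v - u) with ⟨he, -⟩ | ⟨he, -⟩ <;> rw [he] at hd2 <;> linarith
          refine ⟨hvu, hud, Mm_unshift hM ?_⟩
          intro k
          have hk : v ≤ (v :: vs).get k := head_le_get hv k
          have : d ≤ (v :: vs).get k - u := by linarith
          exact this.trans (le_abs_self _)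
end
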